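/- Let n ≥ 1 candidates be indexed by Fin n and let there be m ≥ 1 voters, each voter v equipped with a strict total order ≻_v on Fin n (irreflexive, transitive, and total on distinct pairs). Define Maj(a,b) to hold when the number of voters v with a ≻_v b is strictly greater than m/2, and define the Copeland score w(a) = #{b ≠ a : Maj(a,b)}. If every voter prefers candidate y over candidate y' (i.e., y ≻_v y' for all v), then w(y') ≤ w(y). -/

import Mathlib

theorem copeland_pareto_optimal (n : ℕ) (hn : 1 ≤ n)
    (V : Type) [Fintype V] (hm : 1 ≤ Fintype.card V)
    (pref : V → Fin n → Fin n → Prop)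
    [∀ v a b, Decidable (pref v a b)]
    (hirr : ∀ v a, ¬ pref v a a)
    (htrans : ∀ v a b c, pref v a b → pref v b c → pref v a c)
    (htotal : ∀ v a b, a ≠ b → pref v a b ∨ pref v b a)
    (Maj : Fin n → Fin n → Prop)
    [∀ a b, Decidable (Maj a b)]
    (hMaj : ∀ a b, Maj a b ↔
      ((Finset.univ.filter (fun v => pref v a b)).card : ℝ) > (Fintype.card V : ℝ) / 2)
    (w : Fin n → ℕ)
    (hw : ∀ a, w a = (Finset.univ.filter (fun b => b ≠ a ∧ Maj a b)).card)
    (y y' : Fin n)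
    (hpareto : ∀ v, pref v y y') :
    w y' ≤ w y := by
  -- Maj y y' holds
  have hMyy' : Maj y y' := by
    rw [hMaj]
    have : (Finset.univ.filter (fun v => pref v y y')) = Finset.univ := by
      apply Finset.filter_true_of_mem; intro v _; exact hpareto v
    rw [this]
    simp only [Finset.card_univ]
    have h0 : (0 : ℝ) < (Fintype.card V : ℝ) := by exact_mod_cast hm
    linarith
  -- Maj y' b → Maj y b
  have hlift : ∀ b, Maj y' b → Maj y b := by
    intro b hb
    rw [hMaj] at hb ⊢
    have hsub : (Finset.univ.filter (fun v => pref v y' b)) ⊆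
        (Finset.univ.filter (fun v => pref v y b)) := by
      intro v hv
      simp only [Finset.mem_filter, Finset.mem_univ, true_and] at hv ⊢
      exact htrans v y y' b (hpareto v) hv
    have := Finset.card_le_card hsub
    have : ((Finset.univ.filter (fun v => pref v y' b)).card : ℝ) ≤
        ((Finset.univ.filter (fun v => pref v y b)).card : ℝ) := by exact_mod_cast this
    linarith
  have hyy' : y ≠ y' := by
    intro h
    obtain ⟨v⟩ := Fintype.card_pos_iff.mp hm
    exact hirr v y (h ▸ hpareto v)
  rw [hw, hw]
  apply Finset.card_le_card_of_injOn (fun b => if b = y then y' else b)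
  · intro b hb
    simp only [Finset.mem_coe, Finset.mem_filter, Finset.mem_univ, true_and] at hb ⊢
    obtain ⟨hb1, hb2⟩ := hb
    by_cases h : b = y
    · simp [h, Ne.symm hyy', hMyy']
    · simp only [if_neg h]
      exact ⟨h, hlift b hb2⟩
  · intro a ha b hb hab
    have ha := (Finset.mem_filter.mp ha).2
    have hb := (Finset.mem_filter.mp hb).2
    simp only at hab
    by_cases h1 : a = y <;> by_cases h2 : b = y
    · exact h1.trans h2.symm
    · rw [if_pos h1, if_neg h2] at hab; exact absurd hab.symm hb.1
    · rw [if_neg h1, if_pos h2] at hab; exact absurd hab ha.1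
    · rwa [if_neg h1, if_neg h2] at hab
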